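/- For all complex numbers a, b, all real numbers x > 0 and y > 0, and every real number T, one has ∫_{−∞}^{∞} e^{−(a−b)U − x·cosh(T+U) − y·cosh(T−U)} dU = ∫₀^{∞} ((x e^T + y e^{−T})/v)^{a−b} · exp( −(1/2)( v + (x² + y² + 2xy·cosh(2T))/v ) ) · dv/v. -/

import Mathlib

open MeasureTheory Complex

/-- Substitution identity used in the product formula for two K-Bessel
functions of different orders: for `a b : ℂ`, `x, y > 0` and `T : ℝ`,
`∫_{-∞}^{∞} e^{-(a-b)U - x cosh(T+U) - y cosh(T-U)} dU
  = ∫₀^∞ ((x e^T + y e^{-T})/v)^{a-b} e^{-(1/2)(v + (x²+y²+2xy cosh 2T)/v)} dv/v`. -/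
theorem besselK_substitution (a b : ℂ) (x y : ℝ) (hx : 0 < x) (hy : 0 < y)
    (T : ℝ) :
    ∫ U : ℝ, Complex.exp (-(a - b) * (U : ℂ) -
        ((x * Real.cosh (T + U) : ℝ) : ℂ) - ((y * Real.cosh (T - U) : ℝ) : ℂ)) =
      ∫ v in Set.Ioi (0:ℝ),
        (((x * Real.exp T + y * Real.exp (-T)) / v : ℝ) : ℂ) ^ (a - b) *
          Complex.exp (-(1/2 : ℂ) *
            (((v + (x ^ 2 + y ^ 2 + 2 * x * y * Real.cosh (2 * T)) / v : ℝ)) : ℂ)) /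
          (v : ℂ) := by
  set c := x * Real.exp T + y * Real.exp (-T) with hc
  set d := x * Real.exp (-T) + y * Real.exp T with hd
  have hcpos : 0 < c := by positivity
  have hdpos : 0 < d := by positivity
  have e3 : Real.exp T * Real.exp (-T) = 1 := by
    rw [← Real.exp_add]; simp
  have hcd : x ^ 2 + y ^ 2 + 2 * x * y * Real.cosh (2 * T) = c * d := by
    have e1 : Real.exp (2 * T) = Real.exp T * Real.exp T := by
      rw [← Real.exp_add, two_mul]
    have e2 : Real.exp (-(2 * T)) = Real.exp (-T) * Real.exp (-T) := by
      rw [← Real.exp_add]; ring_nf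
    rw [Real.cosh_eq, e1, e2, hc, hd]
    linear_combination (-(x ^ 2) - y ^ 2) * e3
  set G : ℝ → ℂ := fun v =>
    ((c / v : ℝ) : ℂ) ^ (a - b) *
      Complex.exp (-(1/2 : ℂ) * ((v + c * d / v : ℝ) : ℂ)) / (v : ℂ) with hG
  have hrhs : (∫ v in Set.Ioi (0:ℝ),
      ((c / v : ℝ) : ℂ) ^ (a - b) *
        Complex.exp (-(1/2 : ℂ) *
          (((v + (x ^ 2 + y ^ 2 + 2 * x * y * Real.cosh (2 * T)) / v : ℝ)) : ℂ)) /
        (v : ℂ)) = ∫ v in Set.Ioi (0:ℝ), G v := by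
    rw [hcd]
  rw [hrhs]
  have hderiv : ∀ u ∈ Set.univ, HasDerivWithinAt (fun U : ℝ => c * Real.exp U)
      (c * Real.exp u) Set.univ u := fun u _ =>
    ((Real.hasDerivAt_exp u).const_mul c).hasDerivWithinAt
  have hinj : Set.InjOn (fun U : ℝ => c * Real.exp U) Set.univ := by
    intro u _ w _ h
    simp only at h
    exact Real.exp_injective (mul_left_cancel₀ hcpos.ne' h)
  have himg : (fun U : ℝ => c * Real.exp U) '' Set.univ = Set.Ioi (0:ℝ) := by
    ext v
    simp only [Set.image_univ, Set.mem_range, Set.mem_Ioi]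
    constructor
    · rintro ⟨u, rfl⟩; positivity
    · intro hv
      exact ⟨Real.log (v / c), by
        rw [Real.exp_log (by positivity)]; field_simp⟩
  have key := integral_image_eq_integral_abs_deriv_smul MeasurableSet.univ hderiv hinj G
  rw [himg, setIntegral_univ] at key
  rw [key]
  congr 1
  funext U
  have hce : 0 < c * Real.exp U := by positivity
  have hcosh : c * Real.exp U + d * Real.exp (-U)
      = 2 * (x * Real.cosh (T + U)) + 2 * (y * Real.cosh (T - U)) := by
    simp only [hc, hd, Real.cosh_eq, Real.exp_add, Real.exp_sub, Real.exp_neg]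
    field_simp
    ring
  have h1 : (c / (c * Real.exp U) : ℝ) = Real.exp (-U) := by
    rw [Real.exp_neg]; field_simp
  have h2 : (c * d / (c * Real.exp U) : ℝ) = d * Real.exp (-U) := by
    rw [Real.exp_neg]; field_simp
  have h3 : ((Real.exp (-U) : ℝ) : ℂ) ^ (a - b) = Complex.exp (-(a - b) * U) := by
    rw [Complex.cpow_def_of_ne_zero (by exact_mod_cast (Real.exp_pos _).ne'),
      ← Complex.ofReal_log (Real.exp_pos _).le, Real.log_exp]
    push_cast
    ring_nf
  rw [abs_of_pos hce, hG]
  simp only [h1, h2, h3]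
  rw [real_smul, mul_comm ((c * Real.exp U : ℝ) : ℂ),
    div_mul_cancel₀ _ (show ((c * Real.exp U : ℝ) : ℂ) ≠ 0 by exact_mod_cast hce.ne')]
  rw [← Complex.exp_add]
  congr 1
  have : ((c * Real.exp U + d * Real.exp (-U) : ℝ) : ℂ)
      = 2 * (x * Real.cosh (T + U) : ℝ) + 2 * (y * Real.cosh (T - U) : ℝ) := by
    rw [hcosh]; push_cast; ring
  have h4 : ((c * Real.exp U + d * Real.exp (-U) : ℝ) : ℂ)
      = (c * Real.exp U : ℝ) + (d * Real.exp (-U) : ℝ) := by push_cast; ring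
  have h5 : -(1/2 : ℂ) * ((c * Real.exp U + d * Real.exp (-U) : ℝ) : ℂ)
      = -((x * Real.cosh (T + U) : ℝ) : ℂ) - ((y * Real.cosh (T - U) : ℝ) : ℂ) := by
    rw [this]; ring
  calc -(a - b) * (U : ℂ) - ((x * Real.cosh (T + U) : ℝ) : ℂ)
        - ((y * Real.cosh (T - U) : ℝ) : ℂ)
      = -(a - b) * (U : ℂ) + (-(1/2 : ℂ) *
          ((c * Real.exp U + d * Real.exp (-U) : ℝ) : ℂ)) := by rw [h5]; ring
    _ = -(a - b) * (U : ℂ) + -(1/2 : ℂ) * ((c * Real.exp U : ℝ) : ℂ)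
          + -(1/2 : ℂ) * ((d * Real.exp (-U) : ℝ) : ℂ) := by rw [h4]; ring
    _ = _ := by push_cast; ring
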